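/- Let p₀ > p₁ > p₂ ≥ p₃ ≥ … ≥ p_N be reals in [0,1] with p₀ − p₁ = p₁ − p₂, and set Δᵢ = p₀ − pᵢ for i ≥ 1. Define H⁰ = ∑_{i≥2} (p₁ − pᵢ)⁻² and, for 1 ≤ j ≤ N, Hʲ = ∑_{1≤i≤N, i≠j} (p₀ − pᵢ)⁻². Then for every j with 1 ≤ j ≤ N, (1/4)·H⁰ ≤ Hʲ ≤ 2·H⁰. -/

import Mathlib

lemma aux_low (d a : ℝ) (hd : 0 < d) (hda : d ≤ a) :
    (1/4) * ((a:ℝ)^2)⁻¹ ≤ ((d+a)^2)⁻¹ := by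
  have ha : 0 < a := hd.trans_le hda
  have h1 : (1/4) * (a^2)⁻¹ = ((2*a)^2)⁻¹ := by
    field_simp; ring
  rw [h1]
  apply inv_anti₀ (by positivity)
  nlinarith

lemma aux_up (d a : ℝ) (hd : 0 < d) (hda : d ≤ a) :
    (((d:ℝ)+a)^2)⁻¹ ≤ (a^2)⁻¹ := by
  have ha : 0 < a := hd.trans_le hda
  exact inv_anti₀ (by positivity) (by nlinarith)

theorem stmt_9 (N : ℕ) (hN : 2 ≤ N) (p : ℕ → ℝ)
    (hmem : ∀ i ≤ N, p i ∈ Set.Icc (0 : ℝ) 1)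
    (h01 : p 1 < p 0) (h12 : p 2 < p 1)
    (hmono : ∀ i j, 2 ≤ i → i ≤ j → j ≤ N → p j ≤ p i)
    (hgap : p 0 - p 1 = p 1 - p 2) :
    ∀ j, 1 ≤ j → j ≤ N →
      (1 / 4) * (∑ i ∈ Finset.Icc 2 N, ((p 1 - p i) ^ 2)⁻¹) ≤
          (∑ i ∈ (Finset.Icc 1 N).erase j, ((p 0 - p i) ^ 2)⁻¹) ∧
        (∑ i ∈ (Finset.Icc 1 N).erase j, ((p 0 - p i) ^ 2)⁻¹) ≤
          2 * ∑ i ∈ Finset.Icc 2 N, ((p 1 - p i) ^ 2)⁻¹ := by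
  intro j hj1 hjN
  have hδ : 0 < p 0 - p 1 := by linarith
  -- key facts for i in Icc 2 N
  have hge : ∀ i ∈ Finset.Icc 2 N, p 0 - p 1 ≤ p 1 - p i := by
    intro i hi
    rw [Finset.mem_Icc] at hi
    have := hmono 2 i le_rfl hi.1 hi.2
    linarith
  have hsplit : ∀ i : ℕ, p 0 - p i = (p 0 - p 1) + (p 1 - p i) := by
    intro i; ring
  have hnonneg0 : ∀ i ∈ Finset.Icc 2 N, (0:ℝ) ≤ ((p 1 - p i) ^ 2)⁻¹ := by
    intro i _; exact inv_nonneg.2 (sq_nonneg _)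
  have hH0 : 2 * ∑ i ∈ Finset.Icc 2 N, ((p 1 - p i) ^ 2)⁻¹ =
      (∑ i ∈ Finset.Icc 2 N, ((p 1 - p i) ^ 2)⁻¹) +
      (∑ i ∈ Finset.Icc 2 N, ((p 1 - p i) ^ 2)⁻¹) := by ring
  have hδleH0 : ((p 0 - p 1) ^ 2)⁻¹ ≤ ∑ i ∈ Finset.Icc 2 N, ((p 1 - p i) ^ 2)⁻¹ := by
    have h2mem : 2 ∈ Finset.Icc 2 N := by rw [Finset.mem_Icc]; omega
    have := Finset.single_le_sum hnonneg0 h2mem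
    have heq : ((p 1 - p 2) ^ 2)⁻¹ = ((p 0 - p 1) ^ 2)⁻¹ := by rw [hgap]
    linarith
  rcases eq_or_lt_of_le hj1 with hj | hj
  · -- j = 1
    have hset : (Finset.Icc 1 N).erase j = Finset.Icc 2 N := by
      ext i
      simp only [Finset.mem_erase, Finset.mem_Icc, ← hj]
      omega
    rw [hset]
    constructor
    · rw [Finset.mul_sum]
      apply Finset.sum_le_sum
      intro i hi
      rw [hsplit i]
      exact aux_low _ _ hδ (hge i hi)
    · rw [hH0]
      have h1 : ∑ i ∈ Finset.Icc 2 N, ((p 0 - p i) ^ 2)⁻¹ ≤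
          ∑ i ∈ Finset.Icc 2 N, ((p 1 - p i) ^ 2)⁻¹ := by
        apply Finset.sum_le_sum
        intro i hi
        rw [hsplit i]
        exact aux_up _ _ hδ (hge i hi)
      have h2 : (0:ℝ) ≤ ∑ i ∈ Finset.Icc 2 N, ((p 1 - p i) ^ 2)⁻¹ :=
        Finset.sum_nonneg hnonneg0
      linarith
  · -- 2 ≤ j
    have hj2 : 2 ≤ j := hj
    have hjmem : j ∈ Finset.Icc 2 N := by rw [Finset.mem_Icc]; omega
    have hset : (Finset.Icc 1 N).erase j = insert 1 ((Finset.Icc 2 N).erase j) := by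
      ext i
      simp only [Finset.mem_erase, Finset.mem_Icc, Finset.mem_insert]
      omega
    have h1notin : 1 ∉ (Finset.Icc 2 N).erase j := by
      simp [Finset.mem_erase, Finset.mem_Icc]
    rw [hset, Finset.sum_insert h1notin]
    have hH0split : ∑ i ∈ Finset.Icc 2 N, ((p 1 - p i) ^ 2)⁻¹ =
        ((p 1 - p j) ^ 2)⁻¹ + ∑ i ∈ (Finset.Icc 2 N).erase j, ((p 1 - p i) ^ 2)⁻¹ :=
      (Finset.add_sum_erase _ _ hjmem).symm
    have hgej := hge j hjmem
    have hδpos2 : (0:ℝ) < (p 0 - p 1)^2 := by positivity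
    constructor
    · rw [hH0split, mul_add, Finset.mul_sum]
      have hA : (1/4) * ((p 1 - p j) ^ 2)⁻¹ ≤ ((p 0 - p 1) ^ 2)⁻¹ := by
        have h1 : ((p 1 - p j) ^ 2)⁻¹ ≤ ((p 0 - p 1) ^ 2)⁻¹ :=
          inv_anti₀ hδpos2 (by nlinarith)
        have h2 : (0:ℝ) ≤ ((p 1 - p j) ^ 2)⁻¹ := inv_nonneg.2 (sq_nonneg _)
        linarith
      have hB : ∑ i ∈ (Finset.Icc 2 N).erase j, (1/4) * ((p 1 - p i) ^ 2)⁻¹ ≤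
          ∑ i ∈ (Finset.Icc 2 N).erase j, ((p 0 - p i) ^ 2)⁻¹ := by
        apply Finset.sum_le_sum
        intro i hi
        rw [hsplit i]
        exact aux_low _ _ hδ (hge i (Finset.mem_of_mem_erase hi))
      linarith
    · rw [hH0]
      have hB : ∑ i ∈ (Finset.Icc 2 N).erase j, ((p 0 - p i) ^ 2)⁻¹ ≤
          ∑ i ∈ (Finset.Icc 2 N).erase j, ((p 1 - p i) ^ 2)⁻¹ := by
        apply Finset.sum_le_sum
        intro i hi
        rw [hsplit i]
        exact aux_up _ _ hδ (hge i (Finset.mem_of_mem_erase hi))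
      have hC : ∑ i ∈ (Finset.Icc 2 N).erase j, ((p 1 - p i) ^ 2)⁻¹ ≤
          ∑ i ∈ Finset.Icc 2 N, ((p 1 - p i) ^ 2)⁻¹ :=
        Finset.sum_le_sum_of_subset_of_nonneg (Finset.erase_subset _ _)
          (fun i hi _ => hnonneg0 i hi)
      linarith
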